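/- For every natural number k and every real number x, sin((k+1)x) = 2^k · ∏_{i=0}^{k} sin(x + iπ/(k+1)). -/

import Mathlib

open Real Finset

section ComplexHelpers
open Complex

lemma two_I_sin (z : ℂ) : Complex.exp (I*z) - Complex.exp (-(I*z)) = 2*I*Complex.sin z := by
  rw [Complex.sin]
  field_simp
  ring_nf
  rw [Complex.I_sq]
  ring

lemma exp_sub_exp (w v : ℂ) :
    Complex.exp (I*w) - Complex.exp (I*v)
      = 2*I*Complex.exp (I*(w+v)/2) * Complex.sin ((w-v)/2) := by
  have h := two_I_sin ((w-v)/2)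
  rw [show I*w = I*(w+v)/2 + I*((w-v)/2) by ring,
      show I*v = I*(w+v)/2 + (-(I*((w-v)/2))) by ring,
      Complex.exp_add, Complex.exp_add, ← mul_sub, h]
  ring

set_option maxHeartbeats 1000000 in
lemma complex_key (k : ℕ) (x : ℂ) :
    Complex.sin (((k:ℂ)+1)*x) =
      (2:ℂ)^k * ∏ i ∈ Finset.range (k+1), Complex.sin (x + (i:ℂ)*(Real.pi:ℂ)/((k:ℂ)+1)) := by
  have hn0 : (k+1:ℕ) ≠ 0 := Nat.succ_ne_zero k
  have hnC : ((k:ℂ)+1) ≠ 0 := by exact_mod_cast (Nat.cast_ne_zero (R := ℂ)).mpr hn0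
  set ζ : ℂ := Complex.exp (2*Real.pi*I/((k+1:ℕ):ℂ)) with hζdef
  have hζ : IsPrimitiveRoot ζ (k+1) := Complex.isPrimitiveRoot_exp (k+1) hn0
  have hpoly := X_pow_sub_C_eq_prod hζ.inv (Nat.succ_pos k) (one_pow (k+1))
  have heval := congrArg (Polynomial.eval (Complex.exp (I*(2*x)))) hpoly
  simp only [Polynomial.eval_sub, Polynomial.eval_pow, Polynomial.eval_X, Polynomial.eval_C,
    Polynomial.eval_prod, Polynomial.eval_mul, Polynomial.eval_one, mul_one] at heval
  -- rewrite LHS: exp(I 2x)^(k+1) - 1 = 2 I exp(I(k+1)x) sin((k+1)x)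
  have hL : Complex.exp (I*(2*x)) ^ (k+1) - 1
      = 2*I*Complex.exp (I*((k+1)*x)) * Complex.sin ((k+1)*x) := by
    have h0 := exp_sub_exp (2*(((k:ℂ)+1)*x)) 0
    rw [show I*(2*(((k:ℂ)+1)*x)+0)/2 = I*(((k:ℂ)+1)*x) by ring,
        show (2*(((k:ℂ)+1)*x)-0)/2 = ((k:ℂ)+1)*x by ring,
        show I*(0:ℂ) = 0 by ring, Complex.exp_zero] at h0
    rw [← Complex.exp_nat_mul,
        show ((k+1:ℕ):ℂ) * (I*(2*x)) = I * (2*(((k:ℂ)+1)*x)) by push_cast; ring, h0]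
  -- rewrite each factor
  have hF : ∀ i ∈ Finset.range (k+1), Complex.exp (I*(2*x)) - ζ⁻¹ ^ i
      = 2*I*Complex.exp (I*(x - i*Real.pi/(k+1))) * Complex.sin (x + i*Real.pi/(k+1)) := by
    intro i _
    have hζi : ζ⁻¹ ^ i = Complex.exp (I * (-(2*i*Real.pi/(k+1)))) := by
      rw [hζdef, ← Complex.exp_neg, ← Complex.exp_nat_mul]
      congr 1
      push_cast
      ring
    rw [hζi, exp_sub_exp]
    have h1 : (2*x + -(2*↑i*↑Real.pi/((k:ℂ)+1)))/2 = x - i*Real.pi/(k+1) := by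
      field_simp; ring
    have h2 : (2*x - -(2*↑i*↑Real.pi/((k:ℂ)+1)))/2 = x + i*Real.pi/(k+1) := by
      field_simp; ring
    push_cast at h1 h2
    rw [show I*(2*x + -(2*↑i*↑Real.pi/((k:ℂ)+1)))/2 = I*((2*x + -(2*↑i*↑Real.pi/((k:ℂ)+1)))/2) by ring, h1, h2]
  rw [Finset.prod_congr rfl hF, hL] at heval
  -- split product
  rw [Finset.prod_mul_distrib, Finset.prod_mul_distrib, Finset.prod_const, ← Complex.exp_sum] at heval
  -- sum of exponents
  have hsum : (∑ i ∈ Finset.range (k+1), I*(x - i*Real.pi/(k+1)))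
      = I*((k+1)*x) + (k : ℂ) * (-(Real.pi/2) * I) := by
    have hg : (∑ i ∈ Finset.range (k+1), (i:ℂ)) = ((k:ℂ)+1)*k/2 := by
      have h := Finset.sum_range_id_mul_two (k+1)
      rw [Nat.add_sub_cancel] at h
      have h2 : ((∑ i ∈ Finset.range (k+1), (i:ℂ))) * 2 = ((k:ℂ)+1)*k := by
        have h2 := congrArg (fun m : ℕ => (m:ℂ)) h
        push_cast at h2
        exact h2
      field_simp
      linear_combination h2
    have hterm : ∀ i ∈ Finset.range (k+1),
        I*(x - (i:ℂ)*(Real.pi:ℂ)/((k:ℂ)+1)) = I*x - (I*(Real.pi:ℂ)/((k:ℂ)+1))*(i:ℂ) :=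
      fun i _ => by ring
    rw [Finset.sum_congr rfl hterm, Finset.sum_sub_distrib, Finset.sum_const, ← Finset.mul_sum,
      hg, Finset.card_range]
    simp only [nsmul_eq_mul]
    push_cast
    field_simp
    ring
  rw [hsum, Complex.exp_add] at heval
  have hexpk : Complex.exp ((k:ℂ) * (-(Real.pi/2) * I)) = (-I)^k := by
    rw [Complex.exp_nat_mul]
    congr 1
    rw [Complex.exp_mul_I,
      show (-((Real.pi:ℂ)/2)) = ((-(Real.pi/2) : ℝ) : ℂ) by push_cast; ring,
      ← Complex.ofReal_cos, ← Complex.ofReal_sin]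
    simp
  have hstep : ((2*I)*(-I) : ℂ) = 2 := by
    rw [show ((2*I)*(-I) : ℂ) = -2*(I*I) by ring, Complex.I_mul_I]; norm_num
  have hpow : (2*I:ℂ)^(k+1) * (-I)^k = (2*I) * 2^k := by
    have h1 : ((2*I:ℂ)*(-I))^k = (2*I)^k * (-I)^k := mul_pow _ _ _
    rw [hstep] at h1
    rw [pow_succ, show (2*I:ℂ)^k * (2*I) * (-I)^k = (2*I) * ((2*I)^k * (-I)^k) by ring, ← h1]
  rw [Finset.card_range, hexpk] at heval
  apply mul_left_cancel₀ (show (2*I*Complex.exp (I*(((k:ℂ)+1)*x)):ℂ) ≠ 0 from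
    mul_ne_zero (mul_ne_zero two_ne_zero Complex.I_ne_zero) (Complex.exp_ne_zero _))
  linear_combination heval +
    (∏ i ∈ Finset.range (k+1), Complex.sin (x + (i:ℂ)*(Real.pi:ℂ)/((k:ℂ)+1))) *
      Complex.exp (I*(((k:ℂ)+1)*x)) * hpow

end ComplexHelpers

theorem sin_multiple_as_product (k : ℕ) (x : ℝ) :
    Real.sin ((k + 1) * x) =
      2 ^ k * ∏ i ∈ Finset.range (k + 1), Real.sin (x + i * Real.pi / (k + 1)) := by
  have h := complex_key k (x:ℂ)
  apply Complex.ofReal_injective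
  push_cast
  convert h using 3
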